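/- Under the same hypotheses, if additionally τ is G-equivariant (τ∘σ = σ∘τ for all σ ∈ G), then for all probability measures α, β supported on Ω: W̄₁(ξ♯ f_φ(τ♯α), ξ♯ f_φ(τ♯β)) ≤ 2r · C_φ · C_τ · C_ξ · W̄₁(α, β), where C_τ, C_ξ are the Lipschitz constants of τ, ξ. -/

import Mathlib

open MeasureTheory NNReal ENNReal

noncomputable def W1 {E : Type*} [MeasurableSpace E] [PseudoMetricSpace E]
    (α β : Measure E) : ℝ :=
  ⨅ π : {π : Measure (E × E) // π.map Prod.fst = α ∧ π.map Prod.snd = β},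
    ∫ p, dist p.1 p.2 ∂(π : Measure (E × E))

noncomputable def permMap {d : ℕ} (σ : Equiv.Perm (Fin d)) :
    EuclideanSpace ℝ (Fin d) → EuclideanSpace ℝ (Fin d) :=
  fun x => WithLp.toLp 2 (fun i => x (σ i))

noncomputable def W1bar {d : ℕ} (G : Subgroup (Equiv.Perm (Fin d)))
    (α β : Measure (EuclideanSpace ℝ (Fin d))) : ℝ :=
  ⨅ σ : G, W1 (α.map (permMap (σ : Equiv.Perm (Fin d)))) β

/-- The invariant layer: pushforward of α by x ↦ ∫ φ(x,x') dα(x'). -/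
noncomputable def invLayer {d r : ℕ}
    (φ : EuclideanSpace ℝ (Fin d) → EuclideanSpace ℝ (Fin d) → EuclideanSpace ℝ (Fin r))
    (α : Measure (EuclideanSpace ℝ (Fin d))) : Measure (EuclideanSpace ℝ (Fin r)) :=
  α.map (fun x => ∫ x', φ x x' ∂α)

/- ### Auxiliary lemmas -/

lemma permMap_isometry {d : ℕ} (σ : Equiv.Perm (Fin d)) : Isometry (permMap σ) := by
  refine Isometry.of_dist_eq fun x y => ?_
  rw [EuclideanSpace.dist_eq, EuclideanSpace.dist_eq]
  congr 1
  exact Equiv.sum_comp σ fun i => dist (x i) (y i) ^ 2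

lemma integrable_of_compactSupport' {X E' : Type*} [TopologicalSpace X] [MeasurableSpace X]
    [OpensMeasurableSpace X] [NormedAddCommGroup E'] [SecondCountableTopologyEither X E']
    {f : X → E'} (hf : Continuous f)
    (γ : Measure X) [IsFiniteMeasure γ] {K : Set X} (hK : IsCompact K) (hγ : γ Kᶜ = 0) :
    Integrable f γ := by
  obtain ⟨C, hC⟩ := hK.exists_bound_of_continuousOn hf.continuousOn
  refine Integrable.mono' (integrable_const C) hf.aestronglyMeasurable ?_
  have hae : ∀ᵐ x ∂γ, x ∈ K := by
    rw [ae_iff]; simpa [Set.compl_def] using hγ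
  exact hae.mono fun x hx => hC x hx

lemma lip_F' {d r : ℕ} (Cφ : ℝ≥0)
    (φ : EuclideanSpace ℝ (Fin d) → EuclideanSpace ℝ (Fin d) → EuclideanSpace ℝ (Fin r))
    (hLip2 : ∀ z, LipschitzWith Cφ (fun w => φ w z))
    (γ : Measure (EuclideanSpace ℝ (Fin d))) [IsProbabilityMeasure γ]
    (hint : ∀ z, Integrable (fun w => φ z w) γ) :
    LipschitzWith Cφ (fun z => ∫ w, φ z w ∂γ) := by
  refine LipschitzWith.of_dist_le_mul fun a b => ?_
  rw [dist_eq_norm, ← integral_sub (hint a) (hint b)]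
  refine (norm_integral_le_of_norm_le (integrable_const ((Cφ : ℝ) * dist a b))
    (Filter.Eventually.of_forall fun w => ?_)).trans ?_
  · calc ‖φ a w - φ b w‖ = dist (φ a w) (φ b w) := (dist_eq_norm _ _).symm
      _ ≤ (Cφ : ℝ) * dist a b := (hLip2 w).dist_le_mul a b
  · simp

lemma map_compl_image_null' {d : ℕ} {f : EuclideanSpace ℝ (Fin d) → EuclideanSpace ℝ (Fin d)}
    (hf : Continuous f) (γ : Measure (EuclideanSpace ℝ (Fin d)))
    {K : Set (EuclideanSpace ℝ (Fin d))} (hK : IsCompact K) (hγ : γ Kᶜ = 0) :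
    (γ.map f) (f '' K)ᶜ = 0 := by
  rw [Measure.map_apply hf.measurable ((hK.image hf).isClosed.measurableSet.compl)]
  exact measure_mono_null (fun x hx hxK => hx ⟨x, hxK, rfl⟩) hγ

lemma W1_nonneg {E : Type*} [MeasurableSpace E] [PseudoMetricSpace E] (α β : Measure E) :
    0 ≤ W1 α β :=
  Real.iInf_nonneg fun _ => integral_nonneg fun _ => dist_nonneg

lemma invLayer_perm {d r : ℕ} (Cφ : ℝ≥0)
    (φ : EuclideanSpace ℝ (Fin d) → EuclideanSpace ℝ (Fin d) → EuclideanSpace ℝ (Fin r))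
    (hLip1 : ∀ z, LipschitzWith Cφ (φ z))
    (hLip2 : ∀ z, LipschitzWith Cφ (fun w => φ w z))
    (σ : Equiv.Perm (Fin d))
    (hinvσ : ∀ z₁ z₂, φ (permMap σ z₁) (permMap σ z₂) = φ z₁ z₂)
    (γ : Measure (EuclideanSpace ℝ (Fin d))) [IsProbabilityMeasure γ]
    {K : Set (EuclideanSpace ℝ (Fin d))} (hK : IsCompact K) (hγK : γ Kᶜ = 0) :
    invLayer φ (γ.map (permMap σ)) = invLayer φ γ := by
  have hpc : Continuous (permMap σ) := (permMap_isometry σ).continuous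
  haveI : IsProbabilityMeasure (γ.map (permMap σ)) :=
    Measure.isProbabilityMeasure_map hpc.measurable.aemeasurable
  have hγ' : (γ.map (permMap σ)) (permMap σ '' K)ᶜ = 0 := map_compl_image_null' hpc γ hK hγK
  have hint' : ∀ z, Integrable (fun w => φ z w) (γ.map (permMap σ)) := fun z =>
    integrable_of_compactSupport' (hLip1 z).continuous _ (hK.image hpc) hγ'
  have hFc : Continuous (fun x => ∫ w, φ x w ∂(γ.map (permMap σ))) :=
    (lip_F' Cφ φ hLip2 _ hint').continuous
  rw [invLayer, invLayer, Measure.map_map hFc.measurable hpc.measurable]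
  congr 1
  funext x
  show ∫ w, φ (permMap σ x) w ∂(γ.map (permMap σ)) = ∫ w, φ x w ∂γ
  rw [integral_map hpc.measurable.aemeasurable
    (hLip1 (permMap σ x)).continuous.aestronglyMeasurable]
  simp only [hinvσ]

theorem key_lip {d r : ℕ} (Cφ Cτ Cξ : ℝ≥0)
    (φ : EuclideanSpace ℝ (Fin d) → EuclideanSpace ℝ (Fin d) → EuclideanSpace ℝ (Fin r))
    (hLip1 : ∀ z, LipschitzWith Cφ (φ z))
    (hLip2 : ∀ z, LipschitzWith Cφ (fun w => φ w z))
    (τ : EuclideanSpace ℝ (Fin d) → EuclideanSpace ℝ (Fin d))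
    (ξ : EuclideanSpace ℝ (Fin r) → EuclideanSpace ℝ (Fin r))
    (hτ : LipschitzWith Cτ τ) (hξ : LipschitzWith Cξ ξ)
    (μ ν : Measure (EuclideanSpace ℝ (Fin d)))
    [IsProbabilityMeasure μ] [IsProbabilityMeasure ν]
    {Kμ Kν : Set (EuclideanSpace ℝ (Fin d))} (hKμ : IsCompact Kμ) (hKν : IsCompact Kν)
    (hμ : μ Kμᶜ = 0) (hν : ν Kνᶜ = 0) :
    W1 ((invLayer φ (μ.map τ)).map ξ) ((invLayer φ (ν.map τ)).map ξ)
      ≤ 2 * Cφ * Cτ * Cξ * W1 μ ν := by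
  have hτc : Continuous τ := hτ.continuous
  have hξc : Continuous ξ := hξ.continuous
  haveI : IsProbabilityMeasure (μ.map τ) := Measure.isProbabilityMeasure_map hτc.measurable.aemeasurable
  haveI : IsProbabilityMeasure (ν.map τ) := Measure.isProbabilityMeasure_map hτc.measurable.aemeasurable
  have hμ' : (μ.map τ) (τ '' Kμ)ᶜ = 0 := map_compl_image_null' hτc μ hKμ hμ
  have hν' : (ν.map τ) (τ '' Kν)ᶜ = 0 := map_compl_image_null' hτc ν hKν hν
  have hintμ' : ∀ z, Integrable (fun w => φ z w) (μ.map τ) := fun z =>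
    integrable_of_compactSupport' (hLip1 z).continuous _ (hKμ.image hτc) hμ'
  have hintν' : ∀ z, Integrable (fun w => φ z w) (ν.map τ) := fun z =>
    integrable_of_compactSupport' (hLip1 z).continuous _ (hKν.image hτc) hν'
  set F₁ : EuclideanSpace ℝ (Fin d) → EuclideanSpace ℝ (Fin r) :=
    fun z => ∫ w, φ z w ∂(μ.map τ) with hF₁def
  set F₂ : EuclideanSpace ℝ (Fin d) → EuclideanSpace ℝ (Fin r) :=
    fun z => ∫ w, φ z w ∂(ν.map τ) with hF₂def
  have hF₁ : LipschitzWith Cφ F₁ := lip_F' Cφ φ hLip2 _ hintμ'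
  have hF₂ : LipschitzWith Cφ F₂ := lip_F' Cφ φ hLip2 _ hintν'
  set h₁ : EuclideanSpace ℝ (Fin d) → EuclideanSpace ℝ (Fin r) := fun x => ξ (F₁ (τ x)) with hh₁def
  set h₂ : EuclideanSpace ℝ (Fin d) → EuclideanSpace ℝ (Fin r) := fun x => ξ (F₂ (τ x)) with hh₂def
  have hh₁m : Measurable h₁ := (hξc.comp ((hF₁.continuous).comp hτc)).measurable
  have hh₂m : Measurable h₂ := (hξc.comp ((hF₂.continuous).comp hτc)).measurable
  have hm1 : (invLayer φ (μ.map τ)).map ξ = μ.map h₁ := by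
    rw [invLayer, Measure.map_map hF₁.continuous.measurable hτc.measurable,
      Measure.map_map hξc.measurable (hF₁.continuous.measurable.comp hτc.measurable)]
    rfl
  have hm2 : (invLayer φ (ν.map τ)).map ξ = ν.map h₂ := by
    rw [invLayer, Measure.map_map hF₂.continuous.measurable hτc.measurable,
      Measure.map_map hξc.measurable (hF₂.continuous.measurable.comp hτc.measurable)]
    rfl
  rw [hm1, hm2]
  unfold W1
  rw [Real.mul_iInf_of_nonneg (by positivity)]
  haveI : Nonempty {π : Measure (EuclideanSpace ℝ (Fin d) × EuclideanSpace ℝ (Fin d)) //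
      π.map Prod.fst = μ ∧ π.map Prod.snd = ν} :=
    ⟨⟨μ.prod ν, by simp⟩⟩
  refine le_ciInf fun πs => ?_
  obtain ⟨π, hπ1, hπ2⟩ := πs
  haveI : IsProbabilityMeasure π := by
    constructor
    rw [← Set.preimage_univ (f := (Prod.fst : _ × _ → _)),
      ← Measure.map_apply measurable_fst MeasurableSet.univ, hπ1]
    exact measure_univ
  have hπK : π (Kμ ×ˢ Kν)ᶜ = 0 := by
    have h1 : π (Prod.fst ⁻¹' Kμᶜ) = 0 := by
      rw [← Measure.map_apply measurable_fst hKμ.isClosed.measurableSet.compl, hπ1]; exact hμ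
    have h2 : π (Prod.snd ⁻¹' Kνᶜ) = 0 := by
      rw [← Measure.map_apply measurable_snd hKν.isClosed.measurableSet.compl, hπ2]; exact hν
    refine measure_mono_null (fun p hp => ?_) (measure_union_null h1 h2)
    by_cases hpa : p.1 ∈ Kμ
    · exact Or.inr fun hpb => hp ⟨hpa, hpb⟩
    · exact Or.inl hpa
  have hdist_int : Integrable (fun p => dist p.1 p.2) π :=
    integrable_of_compactSupport' (continuous_fst.dist continuous_snd) π (hKμ.prod hKν) hπK
  set cost : ℝ := ∫ p, dist p.1 p.2 ∂π with hcostdef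
  have hcost0 : 0 ≤ cost := integral_nonneg fun _ => dist_nonneg
  have hFF : ∀ a, dist (F₁ a) (F₂ a) ≤ (Cφ : ℝ) * Cτ * cost := by
    intro a
    have hint1 : Integrable (fun p => φ a (τ p.1)) π :=
      integrable_of_compactSupport'
        ((hLip1 a).continuous.comp (hτc.comp continuous_fst)) π (hKμ.prod hKν) hπK
    have hint2 : Integrable (fun p => φ a (τ p.2)) π :=
      integrable_of_compactSupport'
        ((hLip1 a).continuous.comp (hτc.comp continuous_snd)) π (hKμ.prod hKν) hπK
    have e1 : F₁ a = ∫ p, φ a (τ p.1) ∂π := by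
      calc F₁ a = ∫ w, φ a w ∂((π.map Prod.fst).map τ) := by rw [hπ1]
        _ = ∫ w, φ a w ∂(π.map (τ ∘ Prod.fst)) := by
            rw [Measure.map_map hτc.measurable measurable_fst]
        _ = ∫ p, φ a ((τ ∘ Prod.fst) p) ∂π :=
            integral_map (hτc.measurable.comp measurable_fst).aemeasurable
              (hLip1 a).continuous.aestronglyMeasurable
        _ = ∫ p, φ a (τ p.1) ∂π := rfl
    have e2 : F₂ a = ∫ p, φ a (τ p.2) ∂π := by
      calc F₂ a = ∫ w, φ a w ∂((π.map Prod.snd).map τ) := by rw [hπ2]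
        _ = ∫ w, φ a w ∂(π.map (τ ∘ Prod.snd)) := by
            rw [Measure.map_map hτc.measurable measurable_snd]
        _ = ∫ p, φ a ((τ ∘ Prod.snd) p) ∂π :=
            integral_map (hτc.measurable.comp measurable_snd).aemeasurable
              (hLip1 a).continuous.aestronglyMeasurable
        _ = ∫ p, φ a (τ p.2) ∂π := rfl
    rw [dist_eq_norm, e1, e2, ← integral_sub hint1 hint2]
    refine (norm_integral_le_of_norm_le (hdist_int.const_mul ((Cφ : ℝ) * Cτ))
      (Filter.Eventually.of_forall fun p => ?_)).trans ?_
    · calc ‖φ a (τ p.1) - φ a (τ p.2)‖ = dist (φ a (τ p.1)) (φ a (τ p.2)) :=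
            (dist_eq_norm _ _).symm
        _ ≤ (Cφ : ℝ) * dist (τ p.1) (τ p.2) := (hLip1 a).dist_le_mul _ _
        _ ≤ (Cφ : ℝ) * ((Cτ : ℝ) * dist p.1 p.2) := by
            exact mul_le_mul_of_nonneg_left (hτ.dist_le_mul _ _) Cφ.coe_nonneg
        _ = (Cφ : ℝ) * Cτ * dist p.1 p.2 := by ring
    · rw [integral_const_mul]
  set Φ : (EuclideanSpace ℝ (Fin d) × EuclideanSpace ℝ (Fin d)) →
      (EuclideanSpace ℝ (Fin r) × EuclideanSpace ℝ (Fin r)) :=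
    fun p => (h₁ p.1, h₂ p.2) with hΦdef
  have hΦm : Measurable Φ := (hh₁m.comp measurable_fst).prodMk (hh₂m.comp measurable_snd)
  have hmfst : (π.map Φ).map Prod.fst = μ.map h₁ := by
    rw [Measure.map_map measurable_fst hΦm]
    have : (Prod.fst ∘ Φ) = h₁ ∘ Prod.fst := rfl
    rw [this, ← Measure.map_map hh₁m measurable_fst, hπ1]
  have hmsnd : (π.map Φ).map Prod.snd = ν.map h₂ := by
    rw [Measure.map_map measurable_snd hΦm]
    have : (Prod.snd ∘ Φ) = h₂ ∘ Prod.snd := rfl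
    rw [this, ← Measure.map_map hh₂m measurable_snd, hπ2]
  refine le_trans (ciInf_le ?_ (⟨π.map Φ, hmfst, hmsnd⟩ :
      {π' : Measure (EuclideanSpace ℝ (Fin r) × EuclideanSpace ℝ (Fin r)) //
        π'.map Prod.fst = μ.map h₁ ∧ π'.map Prod.snd = ν.map h₂})) ?_
  · refine ⟨0, ?_⟩
    rintro x ⟨π', rfl⟩
    exact integral_nonneg fun _ => dist_nonneg
  have eΦ : ∫ p, dist p.1 p.2 ∂(π.map Φ) = ∫ p, dist (h₁ p.1) (h₂ p.2) ∂π := by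
    rw [integral_map hΦm.aemeasurable (continuous_fst.dist continuous_snd).aestronglyMeasurable]
  rw [eΦ]
  have hgint : Integrable (fun p : EuclideanSpace ℝ (Fin d) × EuclideanSpace ℝ (Fin d) =>
      (Cξ : ℝ) * ((Cφ : ℝ) * Cτ * dist p.1 p.2 + (Cφ : ℝ) * Cτ * cost)) π :=
    ((hdist_int.const_mul _).add (integrable_const _)).const_mul _
  have hbound : ∀ p : EuclideanSpace ℝ (Fin d) × EuclideanSpace ℝ (Fin d),
      dist (h₁ p.1) (h₂ p.2) ≤ (Cξ : ℝ) * ((Cφ : ℝ) * Cτ * dist p.1 p.2 + (Cφ : ℝ) * Cτ * cost) := by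
    intro p
    calc dist (h₁ p.1) (h₂ p.2) ≤ (Cξ : ℝ) * dist (F₁ (τ p.1)) (F₂ (τ p.2)) :=
          hξ.dist_le_mul _ _
      _ ≤ (Cξ : ℝ) * (dist (F₁ (τ p.1)) (F₁ (τ p.2)) + dist (F₁ (τ p.2)) (F₂ (τ p.2))) := by
          exact mul_le_mul_of_nonneg_left (dist_triangle _ _ _) Cξ.coe_nonneg
      _ ≤ (Cξ : ℝ) * ((Cφ : ℝ) * Cτ * dist p.1 p.2 + (Cφ : ℝ) * Cτ * cost) := by
          refine mul_le_mul_of_nonneg_left (add_le_add ?_ (hFF _)) Cξ.coe_nonneg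
          calc dist (F₁ (τ p.1)) (F₁ (τ p.2)) ≤ (Cφ : ℝ) * dist (τ p.1) (τ p.2) :=
                hF₁.dist_le_mul _ _
            _ ≤ (Cφ : ℝ) * ((Cτ : ℝ) * dist p.1 p.2) :=
                mul_le_mul_of_nonneg_left (hτ.dist_le_mul _ _) Cφ.coe_nonneg
            _ = (Cφ : ℝ) * Cτ * dist p.1 p.2 := by ring
  refine le_trans (integral_mono_of_nonneg (Filter.Eventually.of_forall fun p => dist_nonneg)
    hgint (Filter.Eventually.of_forall hbound)) ?_
  rw [integral_const_mul, integral_add (hdist_int.const_mul _) (integrable_const _),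
    integral_const_mul, integral_const]
  simp only [measure_univ, probReal_univ, ENNReal.toReal_one, smul_eq_mul, one_mul]
  rw [← hcostdef]
  ring_nf
  exact le_refl _

/-- if moreover τ is G-equivariant, then ξ♯ ∘ f_φ ∘ τ♯ is
(2r C_φ C_τ C_ξ)-Lipschitz for the G-invariant 1-Wasserstein distance. -/
theorem invariant_layer_equivariant_lipschitz {d r : ℕ} (G : Subgroup (Equiv.Perm (Fin d)))
    (Cφ Cτ Cξ : ℝ≥0)
    (φ : EuclideanSpace ℝ (Fin d) → EuclideanSpace ℝ (Fin d) → EuclideanSpace ℝ (Fin r))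
    (hLip1 : ∀ z, LipschitzWith Cφ (φ z))
    (hLip2 : ∀ z, LipschitzWith Cφ (fun w => φ w z))
    (hinv : ∀ σ ∈ G, ∀ z₁ z₂, φ (permMap σ z₁) (permMap σ z₂) = φ z₁ z₂)
    (τ : EuclideanSpace ℝ (Fin d) → EuclideanSpace ℝ (Fin d))
    (ξ : EuclideanSpace ℝ (Fin r) → EuclideanSpace ℝ (Fin r))
    (hτ : LipschitzWith Cτ τ) (hξ : LipschitzWith Cξ ξ)
    (hequiv : ∀ σ ∈ G, ∀ x, τ (permMap σ x) = permMap σ (τ x))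
    (Ω : Set (EuclideanSpace ℝ (Fin d))) (hΩ : IsCompact Ω)
    (α β : Measure (EuclideanSpace ℝ (Fin d)))
    [IsProbabilityMeasure α] [IsProbabilityMeasure β]
    (hαΩ : α Ωᶜ = 0) (hβΩ : β Ωᶜ = 0) :
    W1 ((invLayer φ (α.map τ)).map ξ) ((invLayer φ (β.map τ)).map ξ)
      ≤ 2 * r * Cφ * Cτ * Cξ * W1bar G α β := by
  rcases Nat.eq_zero_or_pos r with hr | hr
  · subst hr
    simp only [Nat.cast_zero, mul_zero, zero_mul]
    haveI : Subsingleton (EuclideanSpace ℝ (Fin 0)) :=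
      ⟨fun a b => WithLp.ofLp_injective 2 (funext fun i => i.elim0)⟩
    unfold W1
    refine Real.iInf_nonpos fun πs => le_of_eq ?_
    have : ∀ p : EuclideanSpace ℝ (Fin 0) × EuclideanSpace ℝ (Fin 0), dist p.1 p.2 = 0 :=
      fun p => by rw [Subsingleton.elim p.1 p.2, dist_self]
    simp [this]
  · have hτm : Measurable τ := hτ.continuous.measurable
    unfold W1bar
    rw [Real.mul_iInf_of_nonneg (by positivity)]
    refine le_ciInf fun σs => ?_
    obtain ⟨σ, hσ⟩ := σs
    have hpc : Continuous (permMap σ) := (permMap_isometry σ).continuous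
    haveI : IsProbabilityMeasure (α.map (permMap σ)) :=
      Measure.isProbabilityMeasure_map hpc.measurable.aemeasurable
    haveI : IsProbabilityMeasure (α.map τ) := Measure.isProbabilityMeasure_map hτm.aemeasurable
    have heq : invLayer φ ((α.map (permMap σ)).map τ) = invLayer φ (α.map τ) := by
      have hcomm : (α.map (permMap σ)).map τ = (α.map τ).map (permMap σ) := by
        rw [Measure.map_map hτm hpc.measurable, Measure.map_map hpc.measurable hτm]
        congr 1
        funext x
        exact hequiv σ hσ x
      rw [hcomm, invLayer_perm Cφ φ hLip1 hLip2 σ (hinv σ hσ) (α.map τ)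
        (hΩ.image hτ.continuous) (map_compl_image_null' hτ.continuous α hΩ hαΩ)]
    calc W1 ((invLayer φ (α.map τ)).map ξ) ((invLayer φ (β.map τ)).map ξ)
        = W1 ((invLayer φ ((α.map (permMap σ)).map τ)).map ξ) ((invLayer φ (β.map τ)).map ξ) := by
          rw [heq]
      _ ≤ 2 * Cφ * Cτ * Cξ * W1 (α.map (permMap σ)) β :=
          key_lip Cφ Cτ Cξ φ hLip1 hLip2 τ ξ hτ hξ _ β (hΩ.image hpc) hΩ
            (map_compl_image_null' hpc α hΩ hαΩ) hβΩ
      _ ≤ 2 * r * Cφ * Cτ * Cξ * W1 (α.map (permMap σ)) β := by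
          have h1 : (1 : ℝ) ≤ r := by exact_mod_cast hr
          have hfac : (2 : ℝ) * Cφ * Cτ * Cξ ≤ 2 * r * Cφ * Cτ * Cξ := by
            calc (2 : ℝ) * Cφ * Cτ * Cξ ≤ (r : ℝ) * (2 * Cφ * Cτ * Cξ) :=
                  le_mul_of_one_le_left (by positivity) h1
              _ = 2 * r * Cφ * Cτ * Cξ := by ring
          exact mul_le_mul_of_nonneg_right hfac (W1_nonneg _ _)
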